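/- Let p be a prime and G an elementary abelian p-group. For each subgroup H of G with G/H cyclic fix a_H ∈ G with G = ⟨a_H, H⟩, and let ρ_K denote a linear character of G with kernel K. For H ≠ G, 1 < k < p/2, set x_{k,H} = ∏_{h ∈ H} u_{k, ord_p(k)}(a_H h), where ord_p(k) is the multiplicative order of k modulo p. Then for any subgroup K of G with G/K cyclic, ρ_K(x_{k,H}) = η_k(ζ_p)^{ord_p(k)·|H|} if K = H, and ρ_K(x_{k,H}) = 1 otherwise. -/

import Mathlib

/-- The Bass unit element `u_{k,m}(g)` in the integral group ring `ℤG`. -/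
noncomputable def bassElem {G : Type*} [Group G] (g : G) (k m : ℕ) : MonoidAlgebra ℤ G :=
  (∑ i ∈ Finset.range k, MonoidAlgebra.of ℤ G (g ^ i)) ^ m
    + ((1 - (k : ℤ) ^ m) / (orderOf g : ℤ)) •
        ∑ i ∈ Finset.range (orderOf g), MonoidAlgebra.of ℤ G (g ^ i)

/-- The cyclotomic unit `η_k(z) = (1 - z^k)/(1 - z)` for `z ≠ 1`, and `η_k(1) = 1`. -/
noncomputable def eta (k : ℕ) (z : ℂ) : ℂ := if z = 1 then 1 else (1 - z ^ k) / (1 - z)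

private lemma orderOf_eq_p {p : ℕ} (hp : p.Prime) {M : Type*} [Monoid M] {w : M}
    (hw : w ^ p = 1) (h1 : w ≠ 1) : orderOf w = p := by
  rcases hp.eq_one_or_self_of_dvd _ (orderOf_dvd_of_pow_eq_one hw) with h | h
  · exact absurd (orderOf_eq_one_iff.mp h) h1
  · exact h

private lemma lift_bassElem {p : ℕ} (hp : p.Prime) {G : Type*} [CommGroup G]
    (g : G) (hg : g ^ p = 1) (ρ : G →* ℂ) (k m : ℕ)
    (hdvd : (p : ℤ) ∣ 1 - (k : ℤ) ^ m) :
    MonoidAlgebra.lift ℤ ℂ G ρ (bassElem g k m) = eta k (ρ g) ^ m := by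
  have hρg : (ρ g) ^ p = 1 := by rw [← map_pow, hg, map_one]
  have hlift : MonoidAlgebra.lift ℤ ℂ G ρ (bassElem g k m) =
      (∑ i ∈ Finset.range k, ρ g ^ i) ^ m +
        ((((1 - (k : ℤ) ^ m) / (orderOf g : ℤ) : ℤ)) : ℂ) *
          ∑ i ∈ Finset.range (orderOf g), ρ g ^ i := by
    simp only [bassElem, map_add, map_pow, map_sum, map_smul, map_mul, map_intCast,
      MonoidAlgebra.lift_of, zsmul_eq_mul, smul_eq_mul]
  by_cases h1 : ρ g = 1
  · have horder : (orderOf g : ℤ) ∣ 1 - (k : ℤ) ^ m := by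
      rcases hp.eq_one_or_self_of_dvd _ (orderOf_dvd_of_pow_eq_one hg) with h | h
      · rw [h]; exact one_dvd _
      · rw [h]; exact hdvd
    have hmul : ((1 - (k : ℤ) ^ m) / (orderOf g : ℤ)) * (orderOf g : ℤ)
        = 1 - (k : ℤ) ^ m := Int.ediv_mul_cancel horder
    have hmul' : ((((1 - (k : ℤ) ^ m) / (orderOf g : ℤ) : ℤ)) : ℂ) * ((orderOf g : ℕ) : ℂ)
        = 1 - (k : ℂ) ^ m := by exact_mod_cast congrArg (Int.cast : ℤ → ℂ) hmul
    have heta : eta k (1 : ℂ) = 1 := by simp [eta]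
    rw [hlift, h1, heta, one_pow]
    simp only [one_pow, Finset.sum_const, Finset.card_range, nsmul_eq_mul, mul_one]
    rw [hmul']
    ring
  · have hop : orderOf g = p :=
      orderOf_eq_p hp hg (fun hgeq => h1 (by rw [hgeq, map_one]))
    have hsum : ∑ i ∈ Finset.range p, ρ g ^ i = 0 := by
      rw [geom_sum_eq h1, hρg, sub_self, zero_div]
    rw [hlift, hop, hsum, mul_zero, add_zero]
    congr 1
    rw [geom_sum_eq h1, eta, if_neg h1, ← neg_sub 1 ((ρ g) ^ k), ← neg_sub 1 (ρ g),
      neg_div_neg_eq]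

theorem elementary_abelian_character_prod {p : ℕ} (hp : p.Prime) {G : Type*} [CommGroup G]
    [Fintype G] (hG : ∀ g : G, g ^ p = 1)
    (H K : Subgroup G) (hH : IsCyclic (G ⧸ H)) (hK : IsCyclic (G ⧸ K)) (hHne : H ≠ ⊤)
    (a : G) (ha : Subgroup.closure (insert a (H : Set G)) = ⊤)
    (ρ : G →* ℂ) (hker : ∀ x, ρ x = 1 ↔ x ∈ K)
    (hρa : K = H → IsPrimitiveRoot (ρ a) p)
    (k : ℕ) (hk1 : 1 < k) (hk2 : 2 * k < p) :
    (K = H →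
      MonoidAlgebra.lift ℤ ℂ G ρ (∏ᶠ h : H, bassElem (a * h) k (orderOf (k : ZMod p)))
        = eta k (ρ a) ^ (orderOf (k : ZMod p) * Nat.card H)) ∧
    (K ≠ H →
      MonoidAlgebra.lift ℤ ℂ G ρ (∏ᶠ h : H, bassElem (a * h) k (orderOf (k : ZMod p)))
        = 1) := by
  letI : Fintype ↥H := Fintype.ofFinite _
  set m := orderOf ((k : ZMod p)) with hm
  have hkp : k < p := by omega
  have hpk : ¬ (p ∣ k) := fun hd => by
    have := Nat.le_of_dvd (by omega) hd; omega
  have hdvd : (p : ℤ) ∣ 1 - (k : ℤ) ^ m := by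
    have h1 : ((k : ZMod p)) ^ m = 1 := pow_orderOf_eq_one _
    rw [← ZMod.intCast_zmod_eq_zero_iff_dvd]
    push_cast
    rw [h1, sub_self]
  have hmain : MonoidAlgebra.lift ℤ ℂ G ρ (∏ᶠ h : H, bassElem (a * h) k m)
      = ∏ h : ↥H, eta k (ρ a * ρ (h : G)) ^ m := by
    rw [finprod_eq_prod_of_fintype, map_prod]
    refine Finset.prod_congr rfl fun h _ => ?_
    rw [lift_bassElem hp _ (hG _) ρ k m hdvd, map_mul]
  have hap : (ρ a) ^ p = 1 := by rw [← map_pow, hG, map_one]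
  constructor
  · intro hKH
    have hall : ∀ h : ↥H, ρ (h : G) = 1 := fun h => (hker _).mpr (hKH ▸ h.2)
    rw [hmain]
    simp only [hall, mul_one]
    rw [Finset.prod_const, Finset.card_univ, ← pow_mul, Nat.card_eq_fintype_card, mul_comm]
  · intro hKH
    rw [hmain, Finset.prod_pow]
    suffices hsuff : ∏ h : ↥H, eta k (ρ a * ρ (h : G)) = 1 by rw [hsuff, one_pow]
    by_cases hall : ∀ h : ↥H, ρ (h : G) = 1
    · have hρa1 : ρ a = 1 := by
        by_contra hne
        apply hKH
        have hordρa : orderOf (ρ a) = p := orderOf_eq_p hp hap hne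
        apply le_antisymm
        · intro x hx
          have hρx : ρ x = 1 := (hker x).mpr hx
          have hxtop : x ∈ Subgroup.closure (insert a (H : Set G)) :=
            ha ▸ Subgroup.mem_top x
          rw [Set.insert_eq, Subgroup.closure_union, Subgroup.closure_eq] at hxtop
          obtain ⟨y, hy, z, hz, hyz⟩ := Subgroup.mem_sup.mp hxtop
          obtain ⟨n, hn⟩ := Subgroup.mem_closure_singleton.mp hy
          have har : a ^ n = a ^ (n % (orderOf a : ℤ)).toNat := by
            rw [← zpow_natCast, Int.toNat_of_nonneg
              (Int.emod_nonneg n (by exact_mod_cast (orderOf_pos a).ne'))]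
            exact (zpow_mod_orderOf a n).symm
          set r := (n % (orderOf a : ℤ)).toNat
          have hx' : x = a ^ r * z := by rw [← hyz, ← hn, har]
          have hz1 : ρ z = 1 := hall ⟨z, hz⟩
          have hρar : ρ a ^ r = 1 := by
            have : ρ x = ρ a ^ r * ρ z := by rw [hx', map_mul, map_pow]
            rw [hρx, hz1, mul_one] at this
            exact this.symm
          have hpr : p ∣ r := hordρa ▸ orderOf_dvd_of_pow_eq_one hρar
          have har1 : a ^ r = 1 := by
            obtain ⟨c, hc⟩ := hpr; rw [hc, pow_mul, hG, one_pow]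
          rw [hx', har1, one_mul]
          exact hz
        · intro x hx
          exact (hker x).mp (hall ⟨x, hx⟩)
      have : ∀ h : ↥H, eta k (ρ a * ρ (h : G)) = 1 := fun h => by
        rw [hρa1, hall h, mul_one, eta, if_pos rfl]
      simp only [this, Finset.prod_const_one]
    · push_neg at hall
      obtain ⟨h₀, hh₀⟩ := hall
      set ζ := ρ (h₀ : G) with hζ
      have hζp : ζ ^ p = 1 := by rw [hζ, ← map_pow, hG, map_one]
      have hζord : orderOf ζ = p := orderOf_eq_p hp hζp hh₀
      have hprim : IsPrimitiveRoot ζ p := hζord ▸ IsPrimitiveRoot.orderOf ζ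
      haveI : NeZero p := ⟨hp.pos.ne'⟩
      obtain ⟨i, hi, hpow⟩ := hprim.eq_pow_of_pow_eq_one hap
      set b : ↥H := h₀ ^ i with hbdef
      have hb : ρ (b : G) = ρ a := by
        rw [hbdef]
        push_cast
        rw [map_pow]
        exact hpow
      have hHpow : ∀ h : ↥H, h ^ p = 1 := fun h =>
        Subtype.ext (by push_cast; exact hG (h : G))
      set φ : ↥H → ↥H := fun h => b ^ (k - 1) * h ^ k with hφdef
      have hφinj : Function.Injective φ := by
        intro x y hxy
        have hk' : x ^ k = y ^ k := mul_left_cancel hxy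
        have h1 : (x * y⁻¹) ^ k = 1 := by
          rw [mul_pow, hk', inv_pow, mul_inv_cancel]
        have h2 : (x * y⁻¹) ^ p = 1 := hHpow _
        have hd1 : orderOf (x * y⁻¹) ∣ k := orderOf_dvd_of_pow_eq_one h1
        have hd2 : orderOf (x * y⁻¹) ∣ p := orderOf_dvd_of_pow_eq_one h2
        have hord1 : orderOf (x * y⁻¹) = 1 := by
          rcases hp.eq_one_or_self_of_dvd _ hd2 with h | h
          · exact h
          · exact absurd (h ▸ hd1) hpk
        have := orderOf_eq_one_iff.mp hord1
        rwa [mul_inv_eq_one] at this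
      have hφbij : Function.Bijective φ := Finite.injective_iff_bijective.mp hφinj
      set A : ℂ → ℂ := fun w => if w = 1 then 1 else 1 - w with hA
      have hA0 : ∀ w : ℂ, A w ≠ 0 := by
        intro w
        by_cases h : w = 1 <;> simp [hA, h, sub_ne_zero, Ne.symm]
      have hwp : ∀ h : ↥H, (ρ a * ρ (h : G)) ^ p = 1 := fun h => by
        rw [mul_pow, hap, ← map_pow, hG, map_one, mul_one]
      have keyeta : ∀ h : ↥H,
          eta k (ρ a * ρ (h : G)) = A ((ρ a * ρ (h : G)) ^ k) / A (ρ a * ρ (h : G)) := by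
        intro h
        by_cases hw : ρ a * ρ (h : G) = 1
        · rw [hw, one_pow, eta, if_pos rfl]
          simp [hA]
        · have hwk : (ρ a * ρ (h : G)) ^ k ≠ 1 := by
            intro hc
            have hord := orderOf_eq_p hp (hwp h) hw
            exact hpk (hord ▸ orderOf_dvd_of_pow_eq_one hc)
          rw [eta, if_neg hw]
          simp only [hA, if_neg hw, if_neg hwk]
      have hstep : ∀ h : ↥H, (ρ a * ρ (h : G)) ^ k = ρ a * ρ ((φ h : ↥H) : G) := by
        intro h
        have hcoe : ρ ((φ h : ↥H) : G) = (ρ a) ^ (k - 1) * ρ (h : G) ^ k := by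
          rw [hφdef]
          push_cast
          rw [map_mul, map_pow, map_pow, hb]
        rw [hcoe, mul_pow, ← mul_assoc]
        congr 1
        rw [← pow_succ']
        congr 1
        omega
      calc ∏ h : ↥H, eta k (ρ a * ρ (h : G))
          = ∏ h : ↥H, A ((ρ a * ρ (h : G)) ^ k) / A (ρ a * ρ (h : G)) :=
            Finset.prod_congr rfl fun h _ => keyeta h
        _ = (∏ h : ↥H, A (ρ a * ρ ((φ h : ↥H) : G))) / ∏ h : ↥H, A (ρ a * ρ (h : G)) := by
            rw [Finset.prod_div_distrib]
            congr 1
            exact Finset.prod_congr rfl fun h _ => by rw [hstep h]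
        _ = 1 := by
            have heq : (∏ h : ↥H, A (ρ a * ρ ((φ h : ↥H) : G)))
                = ∏ h : ↥H, A (ρ a * ρ (h : G)) :=
              Fintype.prod_bijective φ hφbij _ _ (fun h => rfl)
            rw [heq]
            exact div_self (Finset.prod_ne_zero_iff.mpr fun h _ => hA0 _)
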